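/- Construction of a MHSS from a final coalgebra: let V be a monoidal category with binary coproducts that distribute over the tensor in its second argument, H an endofunctor on V with pointed tensorial strength θ, and (t, out) a final coalgebra of the functor I + H(−). Writing out⁻¹ = [η, τ] with η : I → t and τ : H t → t, the triple (t, η, τ) is a MHSS for (V, H, θ). -/

import Mathlib

open CategoryTheory Category MonoidalCategory

section

variable {V : Type*} [Category V] [MonoidalCategory V]

/-- A pointed tensorial strength for an endofunctor `H` on a monoidal category `V`:
for each monoidal-pointed object `(z, e : I ⟶ z)` and each `x`, a morphism
`θ_{(z,e),x} : z ⊗ H x ⟶ H (z ⊗ x)`, natural in both arguments, satisfying the unitor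
law and the associator-compatibility (tensor) law. -/
structure PointedStrength (H : V ⥤ V) where
  θ : ∀ (z : V), (𝟙_ V ⟶ z) → ∀ x : V, z ⊗ H.obj x ⟶ H.obj (z ⊗ x)
  /-- naturality in the pointed-object argument -/
  nat_pt : ∀ {z z' : V} (e : 𝟙_ V ⟶ z) (e' : 𝟙_ V ⟶ z') (g : z ⟶ z'), e ≫ g = e' →
    ∀ x : V, g ▷ H.obj x ≫ θ z' e' x = θ z e x ≫ H.map (g ▷ x)
  /-- naturality in the second argument -/
  nat_arg : ∀ (z : V) (e : 𝟙_ V ⟶ z) {x x' : V} (f : x ⟶ x'),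
    z ◁ H.map f ≫ θ z e x' = θ z e x ≫ H.map (z ◁ f)
  /-- preservation of the unitor -/
  unit_law : ∀ x : V, θ (𝟙_ V) (𝟙 (𝟙_ V)) x ≫ H.map (λ_ x).hom = (λ_ (H.obj x)).hom
  /-- preservation of the actor (compatibility with the associator and the tensor of
  pointed objects) -/
  tensor_law : ∀ (z : V) (e : 𝟙_ V ⟶ z) (w : V) (e' : 𝟙_ V ⟶ w) (x : V),
    θ (z ⊗ w) ((λ_ (𝟙_ V)).inv ≫ (e ⊗ₘ e')) x ≫ H.map (α_ z w x).hom =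
      (α_ z w (H.obj x)).hom ≫ z ◁ θ w e' x ≫ θ z e (w ⊗ x)

/-- `(t, η, τ)` is a monoidal heterogeneous substitution system (MHSS) for `(V, H, θ)`:
for every `(z, e : I ⟶ z, f : z ⟶ t)` there is a unique `h : z ⊗ t ⟶ t` with
`(1_z ⊗ η) · h = ρ_z · f` and `(1_z ⊗ τ) · h = θ_{(z,e),t} · H h · τ`. -/
def IsMHSS {H : V ⥤ V} (S : PointedStrength H)
    (t : V) (η : 𝟙_ V ⟶ t) (τ : H.obj t ⟶ t) : Prop :=
  ∀ (z : V) (e : 𝟙_ V ⟶ z) (f : z ⟶ t),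
    ∃! h : z ⊗ t ⟶ t,
      z ◁ η ≫ h = (ρ_ z).hom ≫ f ∧
      z ◁ τ ≫ h = S.θ z e t ≫ H.map h ≫ τ

end

section

open Limits

variable {V : Type*} [Category V] [MonoidalCategory V] [HasBinaryCoproducts V]

/-- The endofunctor `x ↦ I ⨿ H x` (i.e. `I + H(−)`). -/
@[simps]
noncomputable def idPlus (H : V ⥤ V) : V ⥤ V where
  obj x := (𝟙_ V) ⨿ H.obj x
  map f := coprod.map (𝟙 (𝟙_ V)) (H.map f)
  map_id x := by simp
  map_comp f g := by simp

/-- Construction of a MHSS from a final coalgebra: let `V` be a monoidal category with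
binary coproducts that distribute over the tensor in its second argument (with explicit
distributor `δ`), `H` an endofunctor on `V` with pointed tensorial strength `θ`, and
`(t, out)` a final coalgebra of the functor `I + H(−)`.  Writing `out⁻¹ = [η, τ]`, the
triple `(t, η, τ)` is a MHSS for `(V, H, θ)`. -/
theorem mhss_from_final_coalgebra {H : V ⥤ V} (S : PointedStrength H)
    -- binary coproducts distribute over the tensor in its second argument:
    (δ : ∀ v w₁ w₂ : V, v ⊗ (w₁ ⨿ w₂) ⟶ (v ⊗ w₁) ⨿ (v ⊗ w₂))
    (hδ : ∀ v w₁ w₂ : V,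
      coprod.desc (v ◁ (coprod.inl : w₁ ⟶ w₁ ⨿ w₂)) (v ◁ (coprod.inr : w₂ ⟶ w₁ ⨿ w₂)) ≫
          δ v w₁ w₂ = 𝟙 _ ∧
      δ v w₁ w₂ ≫
          coprod.desc (v ◁ (coprod.inl : w₁ ⟶ w₁ ⨿ w₂)) (v ◁ (coprod.inr : w₂ ⟶ w₁ ⨿ w₂)) =
        𝟙 _)
    (t : V) (out : t ⟶ (idPlus H).obj t)
    -- `(t, out)` is a final coalgebra of `I + H(−)`:
    (hfinal : ∀ (x : V) (c : x ⟶ (idPlus H).obj x),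
      ∃! h : x ⟶ t, c ≫ (idPlus H).map h = h ≫ out)
    (η : 𝟙_ V ⟶ t) (τ : H.obj t ⟶ t)
    -- `out⁻¹ = [η, τ]`:
    (hinv₁ : out ≫ coprod.desc η τ = 𝟙 t)
    (hinv₂ : coprod.desc η τ ≫ out = 𝟙 ((idPlus H).obj t)) :
    IsMHSS S t η τ := by
  intro z e f
  obtain ⟨out, rfl⟩ : ∃ o : t ⟶ 𝟙_ V ⨿ H.obj t, o = out := ⟨out, rfl⟩
  replace hinv₁ : out ≫ coprod.desc η τ = 𝟙 t := hinv₁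
  replace hinv₂ : coprod.desc η τ ≫ out = 𝟙 (𝟙_ V ⨿ H.obj t) := hinv₂
  -- basic facts
  have hηout : η ≫ out = (coprod.inl : 𝟙_ V ⟶ 𝟙_ V ⨿ H.obj t) := by
    have := congrArg (fun g => (coprod.inl : 𝟙_ V ⟶ 𝟙_ V ⨿ H.obj t) ≫ g) hinv₂
    simpa [coprod.inl_desc, coprod.inr_desc] using this
  have hτout : τ ≫ out = (coprod.inr : H.obj t ⟶ 𝟙_ V ⨿ H.obj t) := by
    have := congrArg (fun g => (coprod.inr : H.obj t ⟶ 𝟙_ V ⨿ H.obj t) ≫ g) hinv₂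
    simpa [coprod.inl_desc, coprod.inr_desc] using this
  have hδinl : ∀ (w₁ w₂ : V), z ◁ (coprod.inl : w₁ ⟶ w₁ ⨿ w₂) ≫ δ z w₁ w₂ = coprod.inl := by
    intro w₁ w₂
    have := congrArg (fun g => (coprod.inl : z ⊗ w₁ ⟶ (z ⊗ w₁) ⨿ (z ⊗ w₂)) ≫ g) (hδ z w₁ w₂).1
    simpa [coprod.inl_desc, coprod.inr_desc] using this
  have hδinr : ∀ (w₁ w₂ : V), z ◁ (coprod.inr : w₂ ⟶ w₁ ⨿ w₂) ≫ δ z w₁ w₂ = coprod.inr := by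
    intro w₁ w₂
    have := congrArg (fun g => (coprod.inr : z ⊗ w₂ ⟶ (z ⊗ w₁) ⨿ (z ⊗ w₂)) ≫ g) (hδ z w₁ w₂).1
    simpa [coprod.inl_desc, coprod.inr_desc] using this
  have hwdesc : ∀ {w₁ w₂ y : V} (a : w₁ ⟶ y) (b : w₂ ⟶ y),
      z ◁ coprod.desc a b = δ z w₁ w₂ ≫ coprod.desc (z ◁ a) (z ◁ b) := by
    intro w₁ w₂ y a b
    calc z ◁ coprod.desc a b
        = (δ z w₁ w₂ ≫ coprod.desc (z ◁ coprod.inl) (z ◁ coprod.inr)) ≫ z ◁ coprod.desc a b := by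
          rw [(hδ z w₁ w₂).2, Category.id_comp]
      _ = δ z w₁ w₂ ≫ coprod.desc (z ◁ a) (z ◁ b) := by
          rw [Category.assoc, coprod.desc_comp, ← MonoidalCategory.whiskerLeft_comp,
            ← MonoidalCategory.whiskerLeft_comp, coprod.inl_desc, coprod.inr_desc]
  -- the fixed point characterization
  have key : ∀ g : z ⊗ t ⟶ t,
      (z ◁ η ≫ g = (ρ_ z).hom ≫ f ∧ z ◁ τ ≫ g = S.θ z e t ≫ H.map g ≫ τ) ↔
      g = z ◁ out ≫ δ z (𝟙_ V) (H.obj t) ≫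
            coprod.desc ((ρ_ z).hom ≫ f) (S.θ z e t ≫ H.map g ≫ τ) := by
    intro g
    constructor
    · rintro ⟨h1, h2⟩
      calc g = z ◁ (out ≫ coprod.desc η τ) ≫ g := by rw [hinv₁]; simp
        _ = z ◁ out ≫ δ z (𝟙_ V) (H.obj t) ≫ coprod.desc (z ◁ η) (z ◁ τ) ≫ g := by
            rw [MonoidalCategory.whiskerLeft_comp, hwdesc]; simp only [Category.assoc]
        _ = z ◁ out ≫ δ z (𝟙_ V) (H.obj t) ≫
              coprod.desc ((ρ_ z).hom ≫ f) (S.θ z e t ≫ H.map g ≫ τ) := by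
            rw [coprod.desc_comp, h1, h2]
    · intro hg
      constructor
      · conv_lhs => rw [hg]
        rw [← Category.assoc, ← MonoidalCategory.whiskerLeft_comp, hηout,
          ← Category.assoc, hδinl, coprod.inl_desc]
      · conv_lhs => rw [hg]
        rw [← Category.assoc, ← MonoidalCategory.whiskerLeft_comp, hτout,
          ← Category.assoc, hδinr, coprod.inr_desc]
  -- the coalgebra structure on (z ⊗ t) ⨿ t
  set c : (z ⊗ t) ⨿ t ⟶ 𝟙_ V ⨿ H.obj ((z ⊗ t) ⨿ t) :=
    coprod.desc
      (z ◁ out ≫ δ z (𝟙_ V) (H.obj t) ≫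
        coprod.desc ((ρ_ z).hom ≫ f ≫ out ≫ coprod.map (𝟙 (𝟙_ V)) (H.map coprod.inr))
          (S.θ z e t ≫ H.map (coprod.inl : z ⊗ t ⟶ (z ⊗ t) ⨿ t) ≫ coprod.inr))
      (out ≫ coprod.map (𝟙 (𝟙_ V)) (H.map (coprod.inr : t ⟶ (z ⊗ t) ⨿ t))) with hc
  obtain ⟨k, hk, hkuniq⟩ := hfinal _ c
  simp only [idPlus_map] at hk
  replace hk : c ≫ coprod.map (𝟙 (𝟙_ V)) (H.map k) = k ≫ out := hk
  -- inr ≫ k = 𝟙 t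
  obtain ⟨idk, -, hidk⟩ := hfinal t out
  have hinrk : (coprod.inr : t ⟶ (z ⊗ t) ⨿ t) ≫ k = 𝟙 t := by
    have h := congrArg (fun g => (coprod.inr : t ⟶ (z ⊗ t) ⨿ t) ≫ g) hk
    simp only [hc, coprod.inr_desc_assoc] at h
    have e1 : out ≫ (idPlus H).map ((coprod.inr : t ⟶ (z ⊗ t) ⨿ t) ≫ k) =
        ((coprod.inr : t ⟶ (z ⊗ t) ⨿ t) ≫ k) ≫ out := by
      simp only [idPlus_map, H.map_comp]
      calc out ≫ coprod.map (𝟙 (𝟙_ V)) (H.map (coprod.inr : t ⟶ (z ⊗ t) ⨿ t) ≫ H.map k)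
          = (out ≫ coprod.map (𝟙 (𝟙_ V)) (H.map (coprod.inr : t ⟶ (z ⊗ t) ⨿ t))) ≫
              coprod.map (𝟙 (𝟙_ V)) (H.map k) := by
            simp [coprod.map_map]
        _ = ((coprod.inr : t ⟶ (z ⊗ t) ⨿ t) ≫ k) ≫ out := by
            rw [Category.assoc]; rw [Category.assoc] at h; rw [h]; simp
    have e2 : out ≫ (idPlus H).map (𝟙 t) = 𝟙 t ≫ out := by simp; exact Category.comp_id _
    rw [hidk _ e1, hidk _ e2]
  -- the fixed point equation for inl ≫ k
  have hfix : ((coprod.inl : z ⊗ t ⟶ (z ⊗ t) ⨿ t) ≫ k) =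
      z ◁ out ≫ δ z (𝟙_ V) (H.obj t) ≫
        coprod.desc ((ρ_ z).hom ≫ f)
          (S.θ z e t ≫ H.map ((coprod.inl : z ⊗ t ⟶ (z ⊗ t) ⨿ t) ≫ k) ≫ τ) := by
    have h := congrArg (fun g => (coprod.inl : z ⊗ t ⟶ (z ⊗ t) ⨿ t) ≫ g) hk
    simp only [hc, coprod.inl_desc_assoc] at h
    -- h : (z◁out ≫ δ ≫ descBig) ≫ map 𝟙 (H k) = inl ≫ k ≫ out
    have hA : ((ρ_ z).hom ≫ f ≫ out ≫ coprod.map (𝟙 (𝟙_ V))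
          (H.map (coprod.inr : t ⟶ (z ⊗ t) ⨿ t))) ≫ coprod.map (𝟙 (𝟙_ V)) (H.map k) =
        (ρ_ z).hom ≫ f ≫ out := by
      simp [coprod.map_map, ← H.map_comp, hinrk]
    have hB : (S.θ z e t ≫ H.map (coprod.inl : z ⊗ t ⟶ (z ⊗ t) ⨿ t) ≫ coprod.inr) ≫
          coprod.map (𝟙 (𝟙_ V)) (H.map k) =
        S.θ z e t ≫ H.map ((coprod.inl : z ⊗ t ⟶ (z ⊗ t) ⨿ t) ≫ k) ≫ coprod.inr := by
      simp [H.map_comp]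
    have hout : (coprod.inl : z ⊗ t ⟶ (z ⊗ t) ⨿ t) ≫ k ≫ out =
        z ◁ out ≫ δ z (𝟙_ V) (H.obj t) ≫
          coprod.desc ((ρ_ z).hom ≫ f ≫ out)
            (S.θ z e t ≫ H.map ((coprod.inl : z ⊗ t ⟶ (z ⊗ t) ⨿ t) ≫ k) ≫ coprod.inr) := by
      rw [← h]
      simp only [Category.assoc, coprod.desc_comp, coprod.map_map, Category.id_comp,
        coprod.inr_map, ← Functor.map_comp_assoc, ← H.map_comp, hinrk,
        CategoryTheory.Functor.map_id, coprod.map_id_id, Category.comp_id]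
    calc (coprod.inl : z ⊗ t ⟶ (z ⊗ t) ⨿ t) ≫ k
        = ((coprod.inl : z ⊗ t ⟶ (z ⊗ t) ⨿ t) ≫ k ≫ out) ≫ coprod.desc η τ := by
          rw [Category.assoc, Category.assoc, hinv₁, Category.comp_id]
      _ = _ := by
          rw [hout]
          simp only [Category.assoc, coprod.desc_comp, coprod.inr_desc, hinv₁,
            Category.comp_id]
  refine ⟨(coprod.inl : z ⊗ t ⟶ (z ⊗ t) ⨿ t) ≫ k, (key _).2 hfix, ?_⟩
  -- uniqueness
  intro h' hh'
  have hfix' := (key h').1 hh'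
  have hcm : c ≫ coprod.map (𝟙 (𝟙_ V)) (H.map (coprod.desc h' (𝟙 t))) = coprod.desc h' (𝟙 t) ≫ out := by
    simp only [idPlus_map, hc]
    apply coprod.hom_ext
    · simp only [coprod.inl_desc_assoc, coprod.inl_desc]
      conv_rhs => rw [hfix']
      simp only [Category.assoc, coprod.desc_comp, coprod.map_map, Category.id_comp,
        coprod.inr_map, ← Functor.map_comp_assoc, ← H.map_comp, coprod.inl_desc,
        coprod.inr_desc, CategoryTheory.Functor.map_id, coprod.map_id_id, Category.comp_id,
        hτout]
    · simp only [coprod.inr_desc_assoc, coprod.inr_desc, Category.assoc, Category.id_comp]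
      simp only [coprod.map_map, ← H.map_comp, coprod.inr_desc, Category.id_comp,
        CategoryTheory.Functor.map_id, coprod.map_id_id, Category.comp_id]
  have hdk := hkuniq _ hcm
  have : h' = (coprod.inl : z ⊗ t ⟶ (z ⊗ t) ⨿ t) ≫ coprod.desc h' (𝟙 t) := by simp [coprod.inl_desc]
  rw [this, hdk]


end
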